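/- There exist nilpotent 4×4 complex matrices a, b, c with a+b+c = 0, a²+b²+c² = 0, a³+b³+c³ = 0, such that a and b are similar (both similar to the Jordan block J₄) but c is not similar to a (c is similar to diag(J₂, J₂)). -/
import Mathlib

set_option maxHeartbeats 1000000

namespace Stmt15Aux

noncomputable def J : Matrix (Fin 4) (Fin 4) ℂ := !![0,1,0,0; 0,0,1,0; 0,0,0,1; 0,0,0,0]
noncomputable def B : Matrix (Fin 4) (Fin 4) ℂ := !![0,1,-1,-1; 0,0,-1,1; 0,0,0,1; 0,0,0,0]
noncomputable def C : Matrix (Fin 4) (Fin 4) ℂ := !![0,-2,1,1; 0,0,0,-1; 0,0,0,-2; 0,0,0,0]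
noncomputable def PB : Matrix (Fin 4) (Fin 4) ℂ := !![-1,0,-1,0; 0,-1,1,0; 0,0,1,0; 0,0,0,1]
noncomputable def PC : Matrix (Fin 4) (Fin 4) ℂ := !![1,0,-2,0; -1,0,0,1; -2,0,0,0; 0,1,0,0]
noncomputable def K : Matrix (Fin 4) (Fin 4) ℂ := !![0,1,0,0; 0,0,0,0; 0,0,0,1; 0,0,0,0]

lemma J4 : J * (J * (J * J)) = 0 := by
  ext i j
  fin_cases i <;> fin_cases j <;>
    simp [J, Matrix.mul_apply, Fin.sum_univ_four, Matrix.vecHead, Matrix.vecTail]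

lemma B4 : B * (B * (B * B)) = 0 := by
  ext i j
  fin_cases i <;> fin_cases j <;>
    simp [B, Matrix.mul_apply, Fin.sum_univ_four, Matrix.vecHead, Matrix.vecTail]

lemma C2 : C * C = 0 := by
  ext i j
  fin_cases i <;> fin_cases j <;>
    simp [C, Matrix.mul_apply, Fin.sum_univ_four, Matrix.vecHead, Matrix.vecTail]

lemma sum1 : J + B + C = 0 := by
  ext i j
  fin_cases i <;> fin_cases j <;>
    simp [J, B, C, Matrix.vecHead, Matrix.vecTail] <;> ring

lemma sum2 : J * J + B * B + C * C = 0 := by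
  ext i j
  fin_cases i <;> fin_cases j <;>
    simp [J, B, C, Matrix.mul_apply, Fin.sum_univ_four, Matrix.vecHead, Matrix.vecTail] <;> ring

lemma sum3 : J * (J * J) + B * (B * B) + C * (C * C) = 0 := by
  ext i j
  fin_cases i <;> fin_cases j <;>
    simp [J, B, C, Matrix.mul_apply, Fin.sum_univ_four, Matrix.vecHead, Matrix.vecTail] <;> ring

lemma detPB : PB.det = 1 := by
  simp [PB, Matrix.det_succ_row_zero, Fin.sum_univ_succ]

lemma detPC : PC.det = 4 := by
  simp [PC, Matrix.det_succ_row_zero, Fin.sum_univ_succ, Fin.succAbove]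
  norm_num

lemma keyB : B * PB = PB * J := by
  ext i j
  fin_cases i <;> fin_cases j <;>
    simp [B, PB, J, Matrix.mul_apply, Fin.sum_univ_four, Matrix.vecHead, Matrix.vecTail]

lemma keyC : C * PC = PC * K := by
  ext i j
  fin_cases i <;> fin_cases j <;>
    simp [C, PC, K, Matrix.mul_apply, Fin.sum_univ_four, Matrix.vecHead, Matrix.vecTail]

lemma J3ne : J * (J * J) ≠ 0 := by
  intro h
  have := congrFun (congrFun h 0) 3
  simp [J, Matrix.mul_apply, Fin.sum_univ_four, Matrix.vecHead, Matrix.vecTail] at this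

end Stmt15Aux

open Stmt15Aux in
theorem stmt15 :
    ∃ a b c : Matrix (Fin 4) (Fin 4) ℂ,
      IsNilpotent a ∧ IsNilpotent b ∧ IsNilpotent c ∧
      a + b + c = 0 ∧ a ^ 2 + b ^ 2 + c ^ 2 = 0 ∧ a ^ 3 + b ^ 3 + c ^ 3 = 0 ∧
      (∃ P : Matrix (Fin 4) (Fin 4) ℂ, IsUnit P.det ∧
        a = P * !![0,1,0,0; 0,0,1,0; 0,0,0,1; 0,0,0,0] * P⁻¹) ∧
      (∃ P : Matrix (Fin 4) (Fin 4) ℂ, IsUnit P.det ∧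
        b = P * !![0,1,0,0; 0,0,1,0; 0,0,0,1; 0,0,0,0] * P⁻¹) ∧
      (∃ P : Matrix (Fin 4) (Fin 4) ℂ, IsUnit P.det ∧
        c = P * !![0,1,0,0; 0,0,0,0; 0,0,0,1; 0,0,0,0] * P⁻¹) ∧
      ¬ ∃ P : Matrix (Fin 4) (Fin 4) ℂ, IsUnit P.det ∧
        c = P * a * P⁻¹ := by
  have hpow2 : ∀ M : Matrix (Fin 4) (Fin 4) ℂ, M ^ 2 = M * M := fun M => by
    rw [pow_two]
  have hpow3 : ∀ M : Matrix (Fin 4) (Fin 4) ℂ, M ^ 3 = M * (M * M) := fun M => by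
    rw [pow_succ, pow_two, mul_assoc]
  have hpow4 : ∀ M : Matrix (Fin 4) (Fin 4) ℂ, M ^ 4 = M * (M * (M * M)) := fun M => by
    rw [pow_succ, pow_succ, pow_two]
    noncomm_ring
  refine ⟨J, B, C, ⟨4, by rw [hpow4]; exact J4⟩, ⟨4, by rw [hpow4]; exact B4⟩,
    ⟨2, by rw [hpow2]; exact C2⟩, sum1, ?_, ?_, ?_, ?_, ?_, ?_⟩
  · rw [hpow2, hpow2, hpow2]; exact sum2
  · rw [hpow3, hpow3, hpow3]; exact sum3
  · exact ⟨1, by simp, by rw [inv_one, mul_one, one_mul]; rfl⟩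
  · refine ⟨PB, by rw [detPB]; exact isUnit_one, ?_⟩
    have hd : IsUnit PB.det := by rw [detPB]; exact isUnit_one
    calc B = B * (PB * PB⁻¹) := by rw [Matrix.mul_nonsing_inv _ hd, mul_one]
      _ = PB * J * PB⁻¹ := by rw [← mul_assoc, keyB]
    
  · refine ⟨PC, by rw [detPC]; norm_num, ?_⟩
    have hd : IsUnit PC.det := by rw [detPC]; norm_num
    calc C = C * (PC * PC⁻¹) := by rw [Matrix.mul_nonsing_inv _ hd, mul_one]
      _ = PC * K * PC⁻¹ := by rw [← mul_assoc, keyC]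
  · rintro ⟨P, hP, hc⟩
    have h1 : P⁻¹ * P = 1 := Matrix.nonsing_inv_mul P hP
    have hC3 : C * (C * C) = 0 := by rw [C2, mul_zero]
    have hexp : C * (C * C) = P * (J * (J * J)) * P⁻¹ := by
      rw [hc]
      have h2 : P * J * P⁻¹ * (P * J * P⁻¹ * (P * J * P⁻¹))
          = P * (J * ((P⁻¹ * P) * (J * ((P⁻¹ * P) * (J * P⁻¹))))) := by
        simp only [mul_assoc]
      rw [h2, h1]
      simp only [one_mul, mul_assoc]
    have hz : P * (J * (J * J)) * P⁻¹ = 0 := by rw [← hexp, hC3]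
    apply J3ne
    have h3 := congrArg (fun M => P⁻¹ * (M * P)) hz
    simp only [mul_assoc] at h3 ⊢
    rw [h1, mul_one, zero_mul, mul_zero] at h3
    rw [← h3]
    simp only [← mul_assoc]
    rw [h1, one_mul]
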